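/- If a topological group G with identity e and a G*-regular space X are given, then there exists g ∈ G with g ≠ e such that for each open set U ⊆ X and each non-empty finite set F ⊆ U there is a continuous function f : X → G satisfying f(F) ⊆ {e} and f(X \ U) ⊆ {g⁻¹}. -/

import Mathlib

set_option linter.unusedSectionVars false

open Pointwise

section Helpers

variable {G : Type*} [TopologicalSpace G] [Group G] [IsTopologicalGroup G]

private lemma nn_mem_iff {a : G} :
    a ∈ (⊥ : Subgroup G).topologicalClosure ↔ a ∈ closure ({1} : Set G) := by
  rw [← Subgroup.coe_topologicalClosure_bot G]; rfl

private lemma nn_normal : ((⊥ : Subgroup G).topologicalClosure).Normal :=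
  Subgroup.is_normal_topologicalClosure ⊥

private lemma N_one : (1 : G) ∈ closure ({1} : Set G) := subset_closure rfl

private lemma N_mul {a b : G} (ha : a ∈ closure ({1} : Set G))
    (hb : b ∈ closure ({1} : Set G)) : a * b ∈ closure ({1} : Set G) := by
  rw [← nn_mem_iff] at *; exact mul_mem ha hb

private lemma N_inv {a : G} (ha : a ∈ closure ({1} : Set G)) :
    a⁻¹ ∈ closure ({1} : Set G) := by
  rw [← nn_mem_iff] at *; exact inv_mem ha

private lemma N_conj {a : G} (c : G) (ha : a ∈ closure ({1} : Set G)) :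
    c * a * c⁻¹ ∈ closure ({1} : Set G) := by
  rw [← nn_mem_iff] at *; exact nn_normal.conj_mem a ha c

/-- membership in the closed coset `closure {a}` in terms of `closure {1}`. -/
private lemma sp_iff {a b : G} :
    b ∈ closure ({a} : Set G) ↔ a⁻¹ * b ∈ closure ({1} : Set G) := by
  have h1 : ({a} : Set G) = a • ({1} : Set G) := by
    simp [Set.smul_set_singleton]
  rw [h1, closure_smul, Set.mem_smul_set_iff_inv_smul_mem, smul_eq_mul]

private lemma sp_refl (a : G) : a ∈ closure ({a} : Set G) := subset_closure rfl

private lemma sp_symm {a b : G} (h : b ∈ closure ({a} : Set G)) :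
    a ∈ closure ({b} : Set G) := by
  rw [sp_iff] at h ⊢
  simpa using N_inv h

private lemma sp_trans {a b c : G} (hab : b ∈ closure ({a} : Set G))
    (hbc : c ∈ closure ({b} : Set G)) : c ∈ closure ({a} : Set G) := by
  have : closure ({b} : Set G) ⊆ closure ({a} : Set G) :=
    closure_minimal (Set.singleton_subset_iff.2 hab) isClosed_closure
  exact this hbc

private lemma sp_open {a b : G} {V : Set G} (hV : IsOpen V)
    (h : b ∈ closure ({a} : Set G)) (hb : b ∈ V) : a ∈ V := by
  obtain ⟨c, hcV, hc⟩ := mem_closure_iff.1 h V hV hb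
  rwa [← hc]

/-- A function pointwise inseparable from a continuous function is continuous. -/
private lemma continuous_of_sp {X : Type*} [TopologicalSpace X] {f₀ f : X → G}
    (h₀ : Continuous f₀) (h : ∀ y, f y ∈ closure ({f₀ y} : Set G)) :
    Continuous f := by
  rw [continuous_def]
  intro V hV
  have he : f ⁻¹' V = f₀ ⁻¹' V := by
    ext y
    simp only [Set.mem_preimage]
    exact ⟨fun hy => sp_open hV (h y) hy, fun hy => sp_open hV (sp_symm (h y)) hy⟩
  rw [he]; exact hV.preimage h₀

private lemma mul_mem_clg_N {g a b : G} (ha : a ∈ closure ({g} : Set G))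
    (hb : b ∈ closure ({1} : Set G)) : a * b ∈ closure ({g} : Set G) := by
  rw [sp_iff] at ha ⊢
  rw [← mul_assoc]
  exact N_mul ha hb

private lemma mul_mem_N_clg {g a b : G} (ha : a ∈ closure ({1} : Set G))
    (hb : b ∈ closure ({g} : Set G)) : a * b ∈ closure ({g} : Set G) := by
  rw [sp_iff] at hb ⊢
  have he : g⁻¹ * (a * b) = (g⁻¹ * a * g⁻¹⁻¹) * (g⁻¹ * b) := by group
  rw [he]
  exact N_mul (N_conj g⁻¹ ha) hb

/-- The key induction. -/
private lemma key {X : Type*} [TopologicalSpace X] (g : G)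
    (hg : g ∉ closure ({1} : Set G))
    (hsep : ∀ C : Set X, IsClosed C → ∀ x ∉ C,
      ∃ k : X → G, Continuous k ∧ k x = g ∧ ∀ y ∈ C, k y = 1) :
    ∀ (n : ℕ) (F : Finset X) (C : Set X), F.card ≤ n → IsClosed C → (∀ x ∈ F, x ∉ C) →
      ∃ h : X → G, Continuous h ∧ (∀ x ∈ F, h x ∈ closure ({g} : Set G)) ∧
        ∀ y ∈ C, h y ∈ closure ({1} : Set G) := by
  intro n
  induction n with
  | zero =>
    intro F C hcard hC hFC
    refine ⟨fun _ => 1, continuous_const, ?_, fun y _ => N_one⟩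
    intro x hx
    simp [Finset.card_eq_zero.1 (Nat.le_zero.1 hcard)] at hx
  | succ n ih =>
    intro F C hcard hC hFC
    classical
    rcases F.eq_empty_or_nonempty with rfl | ⟨x₁, hx₁⟩
    · exact ⟨fun _ => 1, continuous_const, by simp, fun y _ => N_one⟩
    obtain ⟨k, hkc, hkx₁, hk1⟩ := hsep C hC x₁ (hFC x₁ hx₁)
    by_cases hall : ∀ x ∈ F, k x ∈ closure ({g} : Set G)
    · exact ⟨k, hkc, hall, fun y hy => by rw [hk1 y hy]; exact N_one⟩
    push_neg at hall
    obtain ⟨t, htF, hkt⟩ := hall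
    set S : Finset X := F.filter (fun x => k x ∈ closure ({g} : Set G)) with hS
    set T : Finset X := F.filter (fun x => k x ∉ closure ({g} : Set G)) with hT
    have hSsub : S ⊆ F := Finset.filter_subset _ _
    have hTsub : T ⊆ F := Finset.filter_subset _ _
    have hx₁S : x₁ ∈ S := by
      simp only [hS, Finset.mem_filter]
      exact ⟨hx₁, by rw [hkx₁]; exact sp_refl g⟩
    have hx₁T : x₁ ∉ T := by
      simp only [hT, Finset.mem_filter, not_and, not_not]
      intro _
      rw [hkx₁]; exact sp_refl g
    have htT : t ∈ T := by simp only [hT, Finset.mem_filter]; exact ⟨htF, hkt⟩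
    have htS : t ∉ S := by
      simp only [hS, Finset.mem_filter, not_and]
      exact fun _ => hkt
    have hScard : S.card ≤ n := by
      have h1 : S.card < F.card := Finset.card_lt_card ⟨hSsub, fun hsub => htS (hsub htF)⟩
      omega
    have hTcard : T.card ≤ n := by
      have h1 : T.card < F.card := Finset.card_lt_card ⟨hTsub, fun hsub => hx₁T (hsub hx₁)⟩
      omega
    -- the closed sets
    set B : Set X := k ⁻¹' closure ({g} : Set G) with hB
    have hBclosed : IsClosed B := isClosed_closure.preimage hkc
    set P : Set X := ⋃ x ∈ T, k ⁻¹' closure ({k x} : Set G) with hP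
    have hPclosed : IsClosed P :=
      isClosed_biUnion_finset fun x _ => isClosed_closure.preimage hkc
    -- C ∩ B = ∅ is not needed; we need the point conditions
    have hSnotCP : ∀ x ∈ S, x ∉ C ∪ P := by
      intro x hxS hmem
      have hxg : k x ∈ closure ({g} : Set G) := (Finset.mem_filter.1 hxS).2
      rcases hmem with hxC | hxP
      · exact hFC x (hSsub hxS) hxC
      · obtain ⟨u, huT, hxu⟩ := Set.mem_iUnion₂.1 hxP
        -- k x ∈ closure {k u}, k x ∈ closure {g}  ⇒ k u ∈ closure {g}
        have h1 : k u ∈ closure ({k x} : Set G) := sp_symm hxu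
        have h2 : k u ∈ closure ({g} : Set G) := sp_trans hxg h1
        exact (Finset.mem_filter.1 huT).2 h2
    have hTnotCB : ∀ x ∈ T, x ∉ C ∪ B := by
      intro x hxT hmem
      rcases hmem with hxC | hxB
      · exact hFC x (hTsub hxT) hxC
      · exact (Finset.mem_filter.1 hxT).2 hxB
    obtain ⟨h₁, h₁c, h₁S, h₁CP⟩ := ih S (C ∪ P) hScard (hC.union hPclosed) hSnotCP
    obtain ⟨h₂, h₂c, h₂T, h₂CB⟩ := ih T (C ∪ B) hTcard (hC.union hBclosed) hTnotCB
    refine ⟨fun y => h₁ y * h₂ y, h₁c.mul h₂c, ?_, ?_⟩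
    · intro x hxF
      by_cases hxg : k x ∈ closure ({g} : Set G)
      · have hxS : x ∈ S := Finset.mem_filter.2 ⟨hxF, hxg⟩
        have hxB : x ∈ C ∪ B := Or.inr hxg
        exact mul_mem_clg_N (h₁S x hxS) (h₂CB x hxB)
      · have hxT : x ∈ T := Finset.mem_filter.2 ⟨hxF, hxg⟩
        have hxP : x ∈ C ∪ P := Or.inr (Set.mem_iUnion₂.2 ⟨x, hxT, sp_refl (k x)⟩)
        exact mul_mem_N_clg (h₁CP x hxP) (h₂T x hxT)
    · intro y hy
      exact N_mul (h₁CP y (Or.inl hy)) (h₂CB y (Or.inl hy))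

end Helpers

/-- `X` is `G*`-regular: there is a fixed non-identity `g ∈ G` such that for every closed
`F ⊆ X` and `x ∉ F` there is a continuous `f : X → G` with `f x = g` and `f(F) ⊆ {e}`. -/
def GStarRegular (X G : Type*) [TopologicalSpace X] [TopologicalSpace G]
    [Group G] : Prop :=
  ∃ g : G, g ≠ 1 ∧ ∀ F : Set X, IsClosed F → ∀ x ∉ F,
    ∃ f : X → G, Continuous f ∧ f x = g ∧ ∀ y ∈ F, f y = 1

/-- If `X` is `G*`-regular, then there is `g ≠ e` such that for each open `U ⊆ X` and each
nonempty finite `F ⊆ U` there is a continuous `f : X → G` with `f(F) ⊆ {e}` and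
`f(X \ U) ⊆ {g⁻¹}`. -/
theorem stmt_9 {X G : Type*} [TopologicalSpace X] [TopologicalSpace G]
    [Group G] [IsTopologicalGroup G] (h : GStarRegular X G) :
    ∃ g : G, g ≠ 1 ∧ ∀ U : Set X, IsOpen U → ∀ F : Set X, F.Finite → F.Nonempty →
      F ⊆ U → ∃ f : X → G, Continuous f ∧ (∀ x ∈ F, f x = 1) ∧
        ∀ x ∈ Set.univ \ U, f x = g⁻¹ := by
  classical
  obtain ⟨g, hg1, hsep⟩ := h
  refine ⟨g, hg1, ?_⟩
  intro U hU F hFfin hFne hFU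
  by_cases hgN : g ∈ closure ({1} : Set G)
  · -- `g` is inseparable from `1`: any function with values in `closure {1}` is continuous
    refine ⟨fun y => if y ∈ U then 1 else g⁻¹, ?_, ?_, ?_⟩
    · refine continuous_of_sp (f₀ := fun _ => (1 : G)) continuous_const ?_
      intro y
      by_cases hy : y ∈ U <;> simp only [hy, if_true, if_false]
      · exact N_one
      · exact N_inv hgN
    · intro x hx; simp [hFU hx]
    · intro x hx; simp [hx.2]
  · -- main case
    obtain ⟨h, hc, hF, hC⟩ := key g hgN hsep hFfin.toFinset.card hFfin.toFinset Uᶜ le_rfl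
      (hU.isClosed_compl)
      (fun x hx hxc => hxc (hFU (hFfin.mem_toFinset.1 hx)))
    have hclg : ∀ x ∈ F, h x ∈ closure ({g} : Set G) := fun x hx =>
      hF x (hFfin.mem_toFinset.2 hx)
    refine ⟨fun y => if h y ∈ closure ({g} : Set G) then 1
      else if h y ∈ closure ({1} : Set G) then g⁻¹ else h y * g⁻¹, ?_, ?_, ?_⟩
    · refine continuous_of_sp (f₀ := fun y => h y * g⁻¹) (hc.mul continuous_const) ?_
      intro y
      by_cases h1 : h y ∈ closure ({g} : Set G)
      · simp only [h1, if_true]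
        -- 1 ∈ closure {h y * g⁻¹} ↔ (h y * g⁻¹)⁻¹ ∈ N ↔ h y * g⁻¹ ∈ N
        rw [sp_iff]
        have hn : g⁻¹ * h y ∈ closure ({1} : Set G) := sp_iff.1 h1
        have he : (h y * g⁻¹)⁻¹ * 1 = (g * (g⁻¹ * h y) * g⁻¹)⁻¹ := by group
        rw [he]
        exact N_inv (N_conj g hn)
      · simp only [h1, if_false]
        by_cases h2 : h y ∈ closure ({1} : Set G)
        · simp only [h2, if_true]
          rw [sp_iff]
          have he : (h y * g⁻¹)⁻¹ * g⁻¹ = g * (h y)⁻¹ * g⁻¹ := by group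
          rw [he]
          exact N_conj g (N_inv h2)
        · simp only [h2, if_false]
          exact sp_refl _
    · intro x hx
      simp [hclg x hx]
    · intro x hx
      have hxU : x ∉ U := hx.2
      have hn : h x ∈ closure ({1} : Set G) := hC x hxU
      have h1 : h x ∉ closure ({g} : Set G) := by
        intro hmem
        apply hgN
        have : g⁻¹ * h x ∈ closure ({1} : Set G) := sp_iff.1 hmem
        have hg' : g⁻¹ ∈ closure ({1} : Set G) := by
          have := N_mul this (N_inv hn)
          simpa using this
        simpa using N_inv hg'
      simp [h1, hn]
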